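/- Let n ≥ 3, let J_n ∈ M_n(ℂ) be the nilpotent Jordan block, and let B_n = E_{n−1,1} − E_{n,2} ∈ M_n(ℂ). Then the ℂ-linear span of all products of between 1 and 2n − 3 elements of {J_n, B_n} is a proper subspace of M_n(ℂ); in particular the identity matrix does not lie in this span. -/

import Mathlib

/-- The `n × n` nilpotent Jordan block over `ℂ`. -/
def jordan (n : ℕ) : Matrix (Fin n) (Fin n) ℂ :=
  Matrix.of fun a b => if (a : ℕ) + 1 = (b : ℕ) then 1 else 0

/-- `L_k^0(S)`: the ℂ-linear span of all words in `S` of length between `1` and `k`. -/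
noncomputable def wordSpan0 (n k : ℕ) (S : Set (Matrix (Fin n) (Fin n) ℂ)) :
    Submodule ℂ (Matrix (Fin n) (Fin n) ℂ) :=
  Submodule.span ℂ {M | ∃ w : List (Matrix (Fin n) (Fin n) ℂ),
    1 ≤ w.length ∧ w.length ≤ k ∧ (∀ x ∈ w, x ∈ S) ∧ M = w.prod}

namespace Stmt9Aux

open Matrix


open Matrix

/-- integer-indexed matrix unit (zero when out of range) -/
def f (n : ℕ) (r s : ℤ) : Matrix (Fin n) (Fin n) ℂ :=
  Matrix.of fun i j => if ((i : ℕ) : ℤ) = r ∧ ((j : ℕ) : ℤ) = s then 1 else 0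

def Bm (n : ℕ) : Matrix (Fin n) (Fin n) ℂ :=
  Matrix.of fun i j =>
    (if (i : ℕ) = n - 2 ∧ (j : ℕ) = 0 then 1 else 0) -
      (if (i : ℕ) = n - 1 ∧ (j : ℕ) = 1 then 1 else 0)

lemma sum_ite_eq_int (n : ℕ) (s : ℤ) (g : Fin n → ℂ) :
    (∑ k : Fin n, if ((k : ℕ) : ℤ) = s then g k else 0) =
      if h : 0 ≤ s ∧ s < n then g ⟨s.toNat, by omega⟩ else 0 := by
  by_cases h : 0 ≤ s ∧ s < (n:ℤ)
  · rw [dif_pos h]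
    rw [Finset.sum_eq_single (⟨s.toNat, by omega⟩ : Fin n)]
    · rw [if_pos (by simp; omega)]
    · intro k _ hk
      rw [if_neg]
      intro hks
      exact hk (by apply Fin.ext; simp; omega)
    · simp
  · rw [dif_neg h]
    apply Finset.sum_eq_zero
    intro k _
    rw [if_neg]
    intro hks
    have := k.isLt
    omega

lemma f_mul_apply (n : ℕ) (r s : ℤ) (M : Matrix (Fin n) (Fin n) ℂ) (i j : Fin n) :
    (f n r s * M) i j =
      if ((i : ℕ) : ℤ) = r then
        (if h : 0 ≤ s ∧ s < n then M ⟨s.toNat, by omega⟩ j else 0) else 0 := by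
  rw [Matrix.mul_apply]
  by_cases hir : ((i : ℕ) : ℤ) = r
  · rw [if_pos hir]
    rw [← sum_ite_eq_int n s (fun k => M k j)]
    apply Finset.sum_congr rfl
    intro k _
    simp [f, hir, ite_mul]
  · rw [if_neg hir]
    apply Finset.sum_eq_zero
    intro k _
    simp [f, hir]


open Matrix



lemma f_mul_jordan (n : ℕ) (r s : ℤ) (hs : 0 ≤ s) :
    f n r s * jordan n = f n r (s + 1) := by
  ext i j
  rw [f_mul_apply]
  simp only [f, jordan, Matrix.of_apply]
  by_cases hir : ((i : ℕ) : ℤ) = r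
  · rw [if_pos hir]
    by_cases h : 0 ≤ s ∧ s < (n : ℤ)
    · rw [dif_pos h]
      have hj := j.isLt
      by_cases hj1 : ((j : ℕ) : ℤ) = s + 1
      · rw [if_pos (by omega), if_pos ⟨hir, hj1⟩]
      · rw [if_neg (by omega), if_neg (by tauto)]
    · rw [dif_neg h]
      have hj := j.isLt
      rw [if_neg (by intro hc; omega)]
  · rw [if_neg hir, if_neg (by tauto)]



lemma f_mul_Bm (n : ℕ) (hn : 3 ≤ n) (r s : ℤ) :
    f n r s * Bm n =
      (if s = (n : ℤ) - 2 then f n r 0 else 0) -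
        (if s = (n : ℤ) - 1 then f n r 1 else 0) := by
  by_cases h2 : s = (n : ℤ) - 2
  · rw [if_pos h2, if_neg (by omega), sub_zero]
    ext i j
    rw [f_mul_apply]
    by_cases hir : ((i : ℕ) : ℤ) = r
    · rw [if_pos hir, dif_pos (by omega)]
      simp only [Bm, f, Matrix.of_apply, Matrix.sub_apply]
      rw [if_neg (show ¬(s.toNat = n - 1 ∧ (j : ℕ) = 1) by omega), sub_zero]
      exact if_congr ⟨fun hh => ⟨hir, by omega⟩, fun hh => ⟨by omega, by omega⟩⟩ rfl rfl
    · rw [if_neg hir]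
      simp [f, hir]
  · rw [if_neg h2]
    by_cases h1 : s = (n : ℤ) - 1
    · rw [if_pos h1, zero_sub]
      ext i j
      rw [f_mul_apply]
      by_cases hir : ((i : ℕ) : ℤ) = r
      · rw [if_pos hir, dif_pos (by omega)]
        simp only [Bm, f, Matrix.of_apply, Matrix.neg_apply]
        rw [if_neg (show ¬(s.toNat = n - 2 ∧ (j : ℕ) = 0) by omega), zero_sub, neg_inj]
        exact if_congr ⟨fun hh => ⟨hir, by omega⟩, fun hh => ⟨by omega, by omega⟩⟩ rfl rfl
      · rw [if_neg hir]
        simp [f, hir]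
    · rw [if_neg h1, sub_zero]
      ext i j
      rw [f_mul_apply]
      by_cases hir : ((i : ℕ) : ℤ) = r
      · rw [if_pos hir]
        by_cases h : 0 ≤ s ∧ s < (n : ℤ)
        · rw [dif_pos h]
          simp only [Bm, Matrix.of_apply, Matrix.zero_apply]
          rw [if_neg (show ¬(s.toNat = n - 2 ∧ (j : ℕ) = 0) by omega),
            if_neg (show ¬(s.toNat = n - 1 ∧ (j : ℕ) = 1) by omega), sub_zero]
        · rw [dif_neg h]
          simp
      · rw [if_neg hir]
        simp

lemma jordan_pow_apply (n : ℕ) (a : ℕ) (i j : Fin n) :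
    ((jordan n) ^ a) i j = if (i : ℕ) + a = (j : ℕ) then 1 else 0 := by
  induction a generalizing j with
  | zero =>
    rw [pow_zero, Matrix.one_apply]
    exact if_congr ⟨fun h => by omega, fun h => Fin.ext (by omega)⟩ rfl rfl
  | succ a ih =>
    rw [pow_succ, Matrix.mul_apply]
    have hj := j.isLt
    by_cases h : (i : ℕ) + (a + 1) = (j : ℕ)
    · rw [if_pos (by omega)]
      rw [Finset.sum_eq_single (⟨(i : ℕ) + a, by omega⟩ : Fin n)]
      · rw [ih, if_pos rfl, jordan, Matrix.of_apply, if_pos (by simp; omega), one_mul]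
      · intro k _ hk
        rw [ih, if_neg (fun hc => hk (Fin.ext hc.symm)), zero_mul]
      · simp
    · rw [if_neg (by omega)]
      apply Finset.sum_eq_zero
      intro k _
      rw [ih]
      by_cases hk : (i : ℕ) + a = (k : ℕ)
      · rw [if_pos hk, jordan, Matrix.of_apply, if_neg (by omega), one_mul]
      · rw [if_neg hk, zero_mul]

lemma jordan_pow_mul_Bm (n : ℕ) (hn : 3 ≤ n) (a : ℕ) :
    (jordan n) ^ a * Bm n = f n ((n : ℤ) - 2 - a) 0 - f n ((n : ℤ) - 1 - a) 1 := by
  ext i j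
  rw [Matrix.mul_apply]
  simp only [Matrix.sub_apply, f, Matrix.of_apply, Bm]
  have hi := i.isLt
  have hj := j.isLt
  have key : ∀ k : Fin n, ((jordan n) ^ a) i k * (Bm n) k j =
      (if (i : ℕ) + a = (k : ℕ) ∧ (k : ℕ) = n - 2 ∧ (j : ℕ) = 0 then 1 else 0) -
      (if (i : ℕ) + a = (k : ℕ) ∧ (k : ℕ) = n - 1 ∧ (j : ℕ) = 1 then 1 else 0) := by
    intro k
    rw [jordan_pow_apply]
    by_cases hk : (i : ℕ) + a = (k : ℕ)
    · rw [if_pos hk]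
      simp only [Bm, Matrix.of_apply, hk, true_and, one_mul]
    · rw [if_neg hk]
      simp [hk]
  calc (∑ k, ((jordan n) ^ a) i k * (Bm n) k j)
      = (∑ k : Fin n, ((if (i : ℕ) + a = (k : ℕ) ∧ (k : ℕ) = n - 2 ∧ (j : ℕ) = 0 then 1 else 0) -
          (if (i : ℕ) + a = (k : ℕ) ∧ (k : ℕ) = n - 1 ∧ (j : ℕ) = 1 then (1:ℂ) else 0))) :=
        Finset.sum_congr rfl (fun k _ => key k)
    _ = (∑ k : Fin n, (if (i : ℕ) + a = (k : ℕ) ∧ (k : ℕ) = n - 2 ∧ (j : ℕ) = 0 then (1:ℂ) else 0)) -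
        (∑ k : Fin n, (if (i : ℕ) + a = (k : ℕ) ∧ (k : ℕ) = n - 1 ∧ (j : ℕ) = 1 then (1:ℂ) else 0)) :=
        Finset.sum_sub_distrib _ _
    _ = _ := by
        congr 1
        · by_cases hD : (i : ℕ) + a = n - 2 ∧ (j : ℕ) = 0
          · rw [if_pos (show ((i:ℕ):ℤ) = (n:ℤ) - 2 - a ∧ ((j:ℕ):ℤ) = 0 by omega)]
            rw [Finset.sum_eq_single (⟨n - 2, by omega⟩ : Fin n)]
            · rw [if_pos (by refine ⟨by simp only [Fin.val_mk] <;> omega, by simp only [Fin.val_mk] <;> omega, hD.2⟩)]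
            · intro k _ hk
              rw [if_neg]
              intro hc
              exact hk (Fin.ext (by simp only [Fin.val_mk] <;> omega))
            · simp
          · rw [if_neg (show ¬(((i:ℕ):ℤ) = (n:ℤ) - 2 - a ∧ ((j:ℕ):ℤ) = 0) by omega)]
            apply Finset.sum_eq_zero
            intro k _
            rw [if_neg]
            intro hc
            exact hD ⟨by omega, by omega⟩
        · by_cases hD : (i : ℕ) + a = n - 1 ∧ (j : ℕ) = 1
          · rw [if_pos (show ((i:ℕ):ℤ) = (n:ℤ) - 1 - a ∧ ((j:ℕ):ℤ) = 1 by omega)]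
            rw [Finset.sum_eq_single (⟨n - 1, by omega⟩ : Fin n)]
            · rw [if_pos (by refine ⟨by simp only [Fin.val_mk] <;> omega, by simp only [Fin.val_mk] <;> omega, hD.2⟩)]
            · intro k _ hk
              rw [if_neg]
              intro hc
              exact hk (Fin.ext (by simp only [Fin.val_mk] <;> omega))
            · simp
          · rw [if_neg (show ¬(((i:ℕ):ℤ) = (n:ℤ) - 1 - a ∧ ((j:ℕ):ℤ) = 1) by omega)]
            apply Finset.sum_eq_zero
            intro k _
            rw [if_neg]
            intro hc
            exact hD ⟨by omega, by omega⟩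

lemma trace_f (n : ℕ) (r s : ℤ) :
    Matrix.trace (f n r s) = if r = s ∧ 0 ≤ r ∧ r < n then 1 else 0 := by
  rw [Matrix.trace]
  simp only [Matrix.diag, f, Matrix.of_apply]
  by_cases h : r = s ∧ 0 ≤ r ∧ r < n
  · rw [if_pos h]
    rw [Finset.sum_eq_single (⟨r.toNat, by omega⟩ : Fin n)]
    · rw [if_pos ⟨by simp only [Fin.val_mk] <;> omega, by simp only [Fin.val_mk] <;> omega⟩]
    · intro k _ hk
      rw [if_neg]
      intro hc
      exact hk (Fin.ext (by simp only [Fin.val_mk] <;> omega))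
    · simp
  · rw [if_neg h]
    apply Finset.sum_eq_zero
    intro k _
    have := k.isLt
    rw [if_neg (by omega)]

lemma trace_jordan_pow (n : ℕ) (a : ℕ) (ha : 1 ≤ a) :
    Matrix.trace ((jordan n) ^ a) = 0 := by
  rw [Matrix.trace]
  simp only [Matrix.diag]
  apply Finset.sum_eq_zero
  intro k _
  rw [jordan_pow_apply, if_neg (by omega)]

/-- classification of products of words in `{J, B}`. -/
def Good (n : ℕ) (L : ℕ) (P : Matrix (Fin n) (Fin n) ℂ) : Prop :=
  P = 0 ∨
  P = (jordan n) ^ L ∨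
  (∃ a b : ℕ, L = a + b + 1 ∧
    P = f n ((n : ℤ) - 2 - a) b - f n ((n : ℤ) - 1 - a) (b + 1)) ∨
  (∃ a b : ℕ, L = a + b + n ∧
    P = f n ((n : ℤ) - 2 - a) b + f n ((n : ℤ) - 1 - a) (b + 1)) ∨
  (∃ a b : ℕ, L = a + b + (n - 1) ∧ P = -f n ((n : ℤ) - 1 - a) b) ∨
  (∃ a b : ℕ, L = a + b + (n + 1) ∧ P = -f n ((n : ℤ) - 2 - a) (b + 1))

lemma good_mul_jordan (n : ℕ) (L : ℕ) (P : Matrix (Fin n) (Fin n) ℂ)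
    (h : Good n L P) : Good n (L + 1) (P * jordan n) := by
  obtain h | h | ⟨a, b, hL, h⟩ | ⟨a, b, hL, h⟩ | ⟨a, b, hL, h⟩ | ⟨a, b, hL, h⟩ := h
  · left; rw [h, zero_mul]
  · right; left; rw [h, ← pow_succ]
  · right; right; left
    refine ⟨a, b + 1, by omega, ?_⟩
    rw [h, sub_mul, f_mul_jordan n _ _ (by positivity), f_mul_jordan n _ _ (by positivity)]
    push_cast
    ring_nf
  · right; right; right; left
    refine ⟨a, b + 1, by omega, ?_⟩
    rw [h, add_mul, f_mul_jordan n _ _ (by positivity), f_mul_jordan n _ _ (by positivity)]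
    push_cast
    ring_nf
  · right; right; right; right; left
    refine ⟨a, b + 1, by omega, ?_⟩
    rw [h, neg_mul, f_mul_jordan n _ _ (by positivity)]
    push_cast
    ring_nf
  · right; right; right; right; right
    refine ⟨a, b + 1, by omega, ?_⟩
    rw [h, neg_mul, f_mul_jordan n _ _ (by positivity)]
    push_cast
    ring_nf

lemma good_mul_Bm (n : ℕ) (hn : 3 ≤ n) (L : ℕ) (P : Matrix (Fin n) (Fin n) ℂ)
    (hL : L + 1 ≤ 2 * n - 3) (h : Good n L P) : Good n (L + 1) (P * Bm n) := by
  obtain h | h | ⟨a, b, hLe, h⟩ | ⟨a, b, hLe, h⟩ | ⟨a, b, hLe, h⟩ | ⟨a, b, hLe, h⟩ := h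
  · left; rw [h, zero_mul]
  · -- jordan ^ L * Bm : type C with a = L, b = 0
    right; right; left
    refine ⟨L, 0, by omega, ?_⟩
    rw [h, jordan_pow_mul_Bm n hn L]
    norm_num
  · -- type C times B
    rw [h, sub_mul, f_mul_Bm n hn, f_mul_Bm n hn]
    by_cases h3 : (b : ℤ) = (n : ℤ) - 3
    · -- becomes -f (n-1-a) 0 : type D3 with b' = 0
      right; right; right; right; left
      refine ⟨a, 0, by omega, ?_⟩
      rw [if_neg (by omega), if_neg (by omega), if_pos (by omega), if_neg (by omega)]
      push_cast
      ring_nf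
      abel
    · by_cases h2 : (b : ℤ) = (n : ℤ) - 2
      · -- becomes f (n-2-a) 0 + f (n-1-a) 1 : type D2 with b' = 0
        right; right; right; left
        refine ⟨a, 0, by omega, ?_⟩
        rw [if_pos h2, if_neg (by omega), if_neg (by omega), if_pos (by omega)]
        push_cast
        ring_nf
        abel
      · by_cases h1 : (b : ℤ) = (n : ℤ) - 1
        · -- becomes -f (n-2-a) 1 : type D1 with b' = 0
          right; right; right; right; right
          refine ⟨a, 0, by omega, ?_⟩
          rw [if_neg (by omega), if_pos h1, if_neg (by omega), if_neg (by omega)]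
          push_cast
          ring_nf
          abel
        · left
          rw [if_neg (by omega), if_neg (by omega), if_neg (by omega), if_neg (by omega)]
          simp
  · -- type D2 times B : zero (length forces small b)
    left
    rw [h, add_mul, f_mul_Bm n hn, f_mul_Bm n hn]
    rw [if_neg (by omega), if_neg (by omega), if_neg (by omega), if_neg (by omega)]
    simp
  · left
    rw [h, neg_mul, f_mul_Bm n hn]
    rw [if_neg (by omega), if_neg (by omega)]
    simp
  · left
    rw [h, neg_mul, f_mul_Bm n hn]
    rw [if_neg (by omega), if_neg (by omega)]
    simp

lemma good_trace (n : ℕ) (hn : 3 ≤ n) (L : ℕ) (P : Matrix (Fin n) (Fin n) ℂ)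
    (h1 : 1 ≤ L) (h2 : L ≤ 2 * n - 3) (h : Good n L P) : Matrix.trace P = 0 := by
  obtain h | h | ⟨a, b, hLe, h⟩ | ⟨a, b, hLe, h⟩ | ⟨a, b, hLe, h⟩ | ⟨a, b, hLe, h⟩ := h
  · rw [h]; simp
  · rw [h, trace_jordan_pow n L h1]
  · rw [h, Matrix.trace_sub, trace_f, trace_f]
    rw [if_congr (show ((n:ℤ) - 2 - a = b ∧ 0 ≤ (n:ℤ) - 2 - a ∧ (n:ℤ) - 2 - a < n) ↔
      ((n:ℤ) - 1 - a = b + 1 ∧ 0 ≤ (n:ℤ) - 1 - a ∧ (n:ℤ) - 1 - a < n) by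
        constructor <;> intro hh <;> refine ⟨by omega, by omega, by omega⟩) rfl rfl]
    exact sub_self _
  · rw [h, Matrix.trace_add, trace_f, trace_f]
    rw [if_neg (by omega), if_neg (by omega), add_zero]
  · rw [h, Matrix.trace_neg, trace_f, if_neg (by omega), neg_zero]
  · rw [h, Matrix.trace_neg, trace_f, if_neg (by omega), neg_zero]


lemma good_words (n : ℕ) (hn : 3 ≤ n) (w : List (Matrix (Fin n) (Fin n) ℂ))
    (hmem : ∀ x ∈ w, x = jordan n ∨ x = Bm n) (hlen : w.length ≤ 2 * n - 3) :
    Good n w.length w.prod := by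
  induction w using List.reverseRecOn with
  | nil =>
    right; left
    rw [List.prod_nil, List.length_nil, pow_zero]
  | append_singleton l x ih =>
    rw [List.prod_append, List.prod_singleton, List.length_append, List.length_singleton]
    simp only [List.length_append, List.length_singleton] at hlen
    have hg := ih (fun y hy => hmem y (by simp [hy])) (by omega)
    rcases hmem x (by simp) with hx | hx
    · rw [hx]; exact good_mul_jordan n l.length l.prod hg
    · rw [hx]; exact good_mul_Bm n hn l.length l.prod (by omega) hg

end Stmt9Aux

/-- For `n ≥ 3` and `B_n = E_{n-1,1} - E_{n,2}`: the span of words in `{J_n, B_n}` of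
length between `1` and `2n - 3` is a proper subspace of `M_n(ℂ)`; in particular it does
not contain the identity matrix. -/
theorem stmt_9 (n : ℕ) (hn : 3 ≤ n) :
    let B : Matrix (Fin n) (Fin n) ℂ :=
      Matrix.single ⟨n - 2, by omega⟩ ⟨0, by omega⟩ (1 : ℂ) -
        Matrix.single ⟨n - 1, by omega⟩ ⟨1, by omega⟩ (1 : ℂ)
    wordSpan0 n (2 * n - 3) {jordan n, B} ≠ ⊤ ∧
      (1 : Matrix (Fin n) (Fin n) ℂ) ∉ wordSpan0 n (2 * n - 3) {jordan n, B} := by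
  intro B
  have hB : B = Stmt9Aux.Bm n := by
    ext i j
    simp only [B, Stmt9Aux.Bm, Matrix.sub_apply, Matrix.single, Matrix.of_apply,
      Fin.ext_iff, Fin.val_mk]
    congr 1
    · exact if_congr ⟨fun hh => ⟨hh.1.symm, hh.2.symm⟩, fun hh => ⟨hh.1.symm, hh.2.symm⟩⟩ rfl rfl
    · exact if_congr ⟨fun hh => ⟨hh.1.symm, hh.2.symm⟩, fun hh => ⟨hh.1.symm, hh.2.symm⟩⟩ rfl rfl
  have hker : wordSpan0 n (2 * n - 3) {jordan n, B} ≤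
      LinearMap.ker (Matrix.traceLinearMap (Fin n) ℂ ℂ) := by
    rw [wordSpan0, Submodule.span_le]
    rintro M ⟨w, hw1, hw2, hwmem, rfl⟩
    have hmem : ∀ x ∈ w, x = jordan n ∨ x = Stmt9Aux.Bm n := by
      intro x hx
      rcases hwmem x hx with h | h
      · left; exact h
      · right; rw [Set.mem_singleton_iff] at h; rw [h, hB]
    have hg := Stmt9Aux.good_words n hn w hmem hw2
    have := Stmt9Aux.good_trace n hn w.length w.prod hw1 hw2 hg
    simpa [LinearMap.mem_ker] using this
  have h1 : (1 : Matrix (Fin n) (Fin n) ℂ) ∉ wordSpan0 n (2 * n - 3) {jordan n, B} := by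
    intro hmem
    have := hker hmem
    rw [LinearMap.mem_ker] at this
    simp only [Matrix.traceLinearMap_apply, Matrix.trace_one] at this
    have : (n : ℂ) = 0 := by simpa using this
    have : n = 0 := by exact_mod_cast this
    omega
  refine ⟨fun hTop => h1 (hTop ▸ Submodule.mem_top), h1⟩
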